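/- If (M N) ▷* λx.P (where ▷* is the reflexive-transitive closure of one-step βμμ'-reduction), then M ▷* λy.M₁ for some y, M₁ such that M₁[y:=N] ▷* λx.P. -/

import Mathlib

/-- λμ-terms: variables, λ-abstraction, application, μ-abstraction, named term (α M). -/
inductive Trm : Type
  | var : ℕ → Trm
  | lam : ℕ → Trm → Trm
  | app : Trm → Trm → Trm
  | mu  : ℕ → Trm → Trm
  | mv  : ℕ → Trm → Trm
  deriving DecidableEq

namespace Trm

/-- Substitution M[x:=N]. -/
def subst : Trm → ℕ → Trm → Trm
  | var y, x, N => if y = x then N else var y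
  | lam y B, x, N => if y = x then lam y B else lam y (subst B x N)
  | app A B, x, N => app (subst A x N) (subst B x N)
  | mu a B, x, N => mu a (subst B x N)
  | mv a B, x, N => mv a (subst B x N)

/-- M[α=_r N]: replace each subterm (α U) by (α (U N)). -/
def rsub : Trm → ℕ → Trm → Trm
  | var y, _, _ => var y
  | lam y B, a, N => lam y (rsub B a N)
  | app A B, a, N => app (rsub A a N) (rsub B a N)
  | mu b B, a, N => if b = a then mu b B else mu b (rsub B a N)
  | mv b B, a, N => if b = a then mv b (app (rsub B a N) N) else mv b (rsub B a N)

/-- M[α=_l N]: replace each subterm (α U) by (α (N U)). -/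
def lsub : Trm → ℕ → Trm → Trm
  | var y, _, _ => var y
  | lam y B, a, N => lam y (lsub B a N)
  | app A B, a, N => app (lsub A a N) (lsub B a N)
  | mu b B, a, N => if b = a then mu b B else mu b (lsub B a N)
  | mv b B, a, N => if b = a then mv b (app N (lsub B a N)) else mv b (lsub B a N)

/-- One-step βμμ'-reduction (compatible closure). -/
inductive Red : Trm → Trm → Prop
  | beta (x M N) : Red (app (lam x M) N) (subst M x N)
  | muR (a M N) : Red (app (mu a M) N) (mu a (rsub M a N))
  | muL (a M N) : Red (app M (mu a N)) (mu a (lsub N a M))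
  | appL {M M'} (N) : Red M M' → Red (app M N) (app M' N)
  | appR (M) {N N'} : Red N N' → Red (app M N) (app M N')
  | lamC (x) {M M'} : Red M M' → Red (lam x M) (lam x M')
  | muC (a) {M M'} : Red M M' → Red (mu a M) (mu a M')
  | mvC (a) {M M'} : Red M M' → Red (mv a M) (mv a M')

/-- ▷*: reflexive transitive closure. -/
def Reds : Trm → Trm → Prop := Relation.ReflTransGen Red

/-- Strong normalization: no infinite reduction sequence. -/
def SN (M : Trm) : Prop := Acc (fun a b => Red b a) M

/-- Left-nested application (h M₁ ... Mₙ). -/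
def appList (h : Trm) (l : List Trm) : Trm := l.foldl app h

end Trm

open Trm

lemma reds_appL {M M'} (N : Trm) (h : Reds M M') : Reds (app M N) (app M' N) :=
  Relation.ReflTransGen.lift (fun t => app t N) (fun _ _ r => Red.appL N r) _ _ h

lemma reds_appR (M : Trm) {N N'} (h : Reds N N') : Reds (app M N) (app M N') :=
  Relation.ReflTransGen.lift (fun t => app M t) (fun _ _ r => Red.appR M r) _ _ h

lemma reds_lamC (y : ℕ) {M M'} (h : Reds M M') : Reds (lam y M) (lam y M') :=
  Relation.ReflTransGen.lift (fun t => lam y t) (fun _ _ r => Red.lamC y r) _ _ h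

lemma reds_muC (a : ℕ) {M M'} (h : Reds M M') : Reds (mu a M) (mu a M') :=
  Relation.ReflTransGen.lift (fun t => mu a t) (fun _ _ r => Red.muC a r) _ _ h

lemma reds_mvC (a : ℕ) {M M'} (h : Reds M M') : Reds (mv a M) (mv a M') :=
  Relation.ReflTransGen.lift (fun t => mv a t) (fun _ _ r => Red.mvC a r) _ _ h

lemma subst_red (M : Trm) (x : ℕ) {N N'} (h : Red N N') :
    Reds (subst M x N) (subst M x N') := by
  induction M with
  | var y =>
    simp only [subst]
    split
    · exact Relation.ReflTransGen.single h
    · exact Relation.ReflTransGen.refl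
  | lam y B ih =>
    simp only [subst]
    split
    · exact Relation.ReflTransGen.refl
    · exact reds_lamC y ih
  | app A B ihA ihB =>
    exact Relation.ReflTransGen.trans (reds_appL _ ihA) (reds_appR _ ihB)
  | mu a B ih => exact reds_muC a ih
  | mv a B ih => exact reds_mvC a ih

lemma mu_reds {a : ℕ} {M Q : Trm} (h : Reds (mu a M) Q) : ∃ M', Q = mu a M' := by
  induction h with
  | refl => exact ⟨M, rfl⟩
  | tail _ step ih =>
    obtain ⟨M', rfl⟩ := ih
    cases step with
    | muC _ r => exact ⟨_, rfl⟩

theorem app_reds_lam {M N P : Trm} {x : ℕ}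
    (h : Reds (app M N) (lam x P)) :
    ∃ (y : ℕ) (M₁ : Trm), Reds M (lam y M₁) ∧ Reds (subst M₁ y N) (lam x P) := by
  suffices H : ∀ T, Reds T (lam x P) → ∀ M N, T = app M N →
      ∃ (y : ℕ) (M₁ : Trm), Reds M (lam y M₁) ∧ Reds (subst M₁ y N) (lam x P) from
    H _ h M N rfl
  intro T h
  induction h using Relation.ReflTransGen.head_induction_on with
  | refl => intro M N hEq; cases hEq
  | head step rest ih =>
    intro M N hEq
    subst hEq
    cases step with
    | beta x₀ M₀ N =>
      exact ⟨x₀, M₀, Relation.ReflTransGen.refl, rest⟩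
    | muR a M₀ N =>
      obtain ⟨M', hM'⟩ := mu_reds rest
      cases hM'
    | muL a M₀ N =>
      obtain ⟨M', hM'⟩ := mu_reds rest
      cases hM'
    | appL _ r =>
      obtain ⟨y, M₁, h1, h2⟩ := ih _ _ rfl
      exact ⟨y, M₁, Relation.ReflTransGen.head r h1, h2⟩
    | appR _ r =>
      obtain ⟨y, M₁, h1, h2⟩ := ih _ _ rfl
      exact ⟨y, M₁, h1, Relation.ReflTransGen.trans (subst_red M₁ y r) h2⟩
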